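/- Let n ≡ 1 or 5 (mod 6) and g ∈ Z_n. Let D'_g be the directed graph on vertex set Z_n with an arc from i+g to -2i+g for each i ∈ Z_n. Then the directed graph D'_g ∪ D'_{g+1} is strongly connected. -/

import Mathlib

/-- For `n ≡ 1` or `5 (mod 6)` and `g ∈ ZMod n`, the union of the directed
graphs `D'_g` and `D'_{g+1}` (arcs `i+g → -2i+g` for each `i`) is strongly
connected. -/
theorem digraph_union_strongly_connected (n : ℕ)
    (hn : n % 6 = 1 ∨ n % 6 = 5) (g : ZMod n) :
    ∀ u v : ZMod n,
      Relation.ReflTransGen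
        (fun a b =>
          (∃ i : ZMod n, a = i + g ∧ b = -2 * i + g) ∨
          (∃ i : ZMod n, a = i + (g + 1) ∧ b = -2 * i + (g + 1)))
        u v := by
  intro u v
  haveI : NeZero n := ⟨by omega⟩
  set R : ZMod n → ZMod n → Prop := fun a b =>
      (∃ i : ZMod n, a = i + g ∧ b = -2 * i + g) ∨
      (∃ i : ZMod n, a = i + (g + 1) ∧ b = -2 * i + (g + 1)) with hR
  have stepA : ∀ a : ZMod n, R a (-2 * a + 3 * g) := by
    intro a; left; exact ⟨a - g, by ring, by ring⟩
  have stepB : ∀ a : ZMod n, R a (-2 * a + 3 * g + 3) := by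
    intro a; right; exact ⟨a - (g + 1), by ring, by ring⟩
  have twostep : ∀ a : ZMod n, ∀ e : ℕ, e < 4 →
      Relation.ReflTransGen R a (4 * a - 3 * g + 3 * (e : ZMod n) - 6) := by
    intro a e he
    interval_cases e
    · refine (Relation.ReflTransGen.single (stepB a)).tail ?_
      have h := stepA (-2 * a + 3 * g + 3)
      convert h using 1; push_cast; ring
    · refine (Relation.ReflTransGen.single (stepB a)).tail ?_
      have h := stepB (-2 * a + 3 * g + 3)
      convert h using 1; push_cast; ring
    · refine (Relation.ReflTransGen.single (stepA a)).tail ?_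
      have h := stepA (-2 * a + 3 * g)
      convert h using 1; push_cast; ring
    · refine (Relation.ReflTransGen.single (stepA a)).tail ?_
      have h := stepB (-2 * a + 3 * g)
      convert h using 1; push_cast; ring
  have key : ∀ k : ℕ, ∀ a : ZMod n, ∀ E : ℕ, E < 4 ^ k →
      Relation.ReflTransGen R a
        ((4 : ZMod n) ^ k * a + (1 - (4 : ZMod n) ^ k) * g
          + 3 * (E : ZMod n) - 2 * ((4 : ZMod n) ^ k - 1)) := by
    intro k
    induction k with
    | zero =>
        intro a E hE
        interval_cases E
        have h : (4 : ZMod n) ^ 0 * a + (1 - (4 : ZMod n) ^ 0) * g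
            + 3 * ((0 : ℕ) : ZMod n) - 2 * ((4 : ZMod n) ^ 0 - 1) = a := by
          push_cast; ring
        rw [h]
    | succ k ih =>
        intro a E hE
        have he4 : E / 4 ^ k < 4 :=
          Nat.div_lt_of_lt_mul (by rw [pow_succ] at hE; omega)
        have hE'lt : E % 4 ^ k < 4 ^ k :=
          Nat.mod_lt _ (by positivity)
        have hEeq : 4 ^ k * (E / 4 ^ k) + E % 4 ^ k = E := Nat.div_add_mod E (4 ^ k)
        have h1 := twostep a (E / 4 ^ k) he4
        have h2 := ih (4 * a - 3 * g + 3 * ((E / 4 ^ k : ℕ) : ZMod n) - 6)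
          (E % 4 ^ k) hE'lt
        have hcast : (E : ZMod n)
            = (4 : ZMod n) ^ k * ((E / 4 ^ k : ℕ) : ZMod n) + ((E % 4 ^ k : ℕ) : ZMod n) := by
          conv_lhs => rw [← hEeq]
          push_cast; ring
        have heq : (4 : ZMod n) ^ (k + 1) * a + (1 - (4 : ZMod n) ^ (k + 1)) * g
              + 3 * (E : ZMod n) - 2 * ((4 : ZMod n) ^ (k + 1) - 1)
            = (4 : ZMod n) ^ k * (4 * a - 3 * g + 3 * ((E / 4 ^ k : ℕ) : ZMod n) - 6)
              + (1 - (4 : ZMod n) ^ k) * g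
              + 3 * ((E % 4 ^ k : ℕ) : ZMod n) - 2 * ((4 : ZMod n) ^ k - 1) := by
          rw [hcast]; ring
        rw [heq]
        exact h1.trans h2
  -- 3 is a unit mod n
  have h3 : ¬ (3 ∣ n) := by omega
  have hcop : Nat.Coprime 3 n := (Nat.prime_three.coprime_iff_not_dvd).mpr h3
  have hu : IsUnit (3 : ZMod n) := by
    have h := (ZMod.isUnit_iff_coprime 3 n).mpr hcop
    simpa using h
  set w : ZMod n := v - (4 : ZMod n) ^ n * u - (1 - (4 : ZMod n) ^ n) * g
      + 2 * ((4 : ZMod n) ^ n - 1) with hw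
  set E : ℕ := (w * (3 : ZMod n)⁻¹).val with hE
  have hnlt : n < 4 ^ n := Nat.lt_pow_self (by norm_num)
  have hElt : E < 4 ^ n := lt_of_lt_of_le (ZMod.val_lt _) (le_of_lt hnlt)
  have h2 := key n u E hElt
  have hc : ((E : ℕ) : ZMod n) = w * (3 : ZMod n)⁻¹ := ZMod.natCast_zmod_val _
  have h3E : (3 : ZMod n) * ((E : ℕ) : ZMod n) = w := by
    rw [hc, ← mul_assoc, mul_comm (3 : ZMod n), mul_assoc,
      ZMod.mul_inv_of_unit _ hu, mul_one]
  have hfin : (4 : ZMod n) ^ n * u + (1 - (4 : ZMod n) ^ n) * g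
      + 3 * ((E : ℕ) : ZMod n) - 2 * ((4 : ZMod n) ^ n - 1) = v := by
    rw [h3E, hw]; ring
  rw [hfin] at h2
  exact h2
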